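/- Let D be a triangulated category, E ⊆ D admissible, and (G, F) an adjoint pair of exact endofunctors of D. If F restricts to an autoequivalence of E and acts nilpotently on E^⊥, then G maps the left orthogonal ^⊥E into itself and acts nilpotently on ^⊥E, i.e. G(^⊥E) ⊆ ^⊥E and G^b(^⊥E) = 0 for some natural number b. -/

import Mathlib

/-!
Let `D` be a triangulated category, `E ⊆ D` admissible, and `(G, F)` an adjoint pair of
exact endofunctors of `D`.  If `F` restricts to an autoequivalence of `E` and acts
nilpotently on `E^⊥`, then `G` maps the left orthogonal `^⊥E` into itself and acts
nilpotently on `^⊥E`: `G(^⊥E) ⊆ ^⊥E` and `G^b(^⊥E) = 0` for some natural number `b`.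
-/

open CategoryTheory Limits CategoryTheory.Pretriangulated

namespace Stmt5

universe v u

variable {D : Type u} [Category.{v} D] [Preadditive D] [HasZeroObject D]
  [HasShift D ℤ] [∀ n : ℤ, (CategoryTheory.shiftFunctor D n).Additive] [Pretriangulated D]

/-- Iterated composition of an endofunctor. -/
def iter (F : D ⥤ D) : ℕ → D ⥤ D
  | 0 => 𝟭 D
  | n + 1 => iter F n ⋙ F

/-- The right orthogonal of a class of objects. -/
def rOrth (P : D → Prop) : D → Prop := fun d => ∀ e : D, P e → ∀ f : e ⟶ d, f = 0

/-- The left orthogonal of a class of objects. -/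
def lOrth (P : D → Prop) : D → Prop := fun d => ∀ e : D, P e → ∀ f : d ⟶ e, f = 0


/-- `F ⋙ iter F n ≅ iter F n ⋙ F`. -/
def iterCompIso (F : D ⥤ D) : ∀ n : ℕ, F ⋙ iter F n ≅ iter F n ⋙ F
  | 0 => F.rightUnitor ≪≫ F.leftUnitor.symm
  | n + 1 => (Functor.associator F (iter F n) F).symm ≪≫
      Functor.isoWhiskerRight (iterCompIso F n) F

/-- `P` closed under iterates of `F`. -/
lemma iterP (P : D → Prop) (F : D ⥤ D) (hFP : ∀ d : D, P d → P (F.obj d)) :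
    ∀ (n : ℕ) (d : D), P d → P ((iter F n).obj d)
  | 0, d, hd => hd
  | n + 1, d, hd => hFP _ (iterP P F hFP n d hd)

/-- `iter F n` commutes with shifts. -/
def iterCommShift (F : D ⥤ D) [F.CommShift ℤ] : ∀ n : ℕ, (iter F n).CommShift ℤ
  | 0 => inferInstanceAs ((𝟭 D).CommShift ℤ)
  | n + 1 => letI := iterCommShift F n; inferInstanceAs ((iter F n ⋙ F).CommShift ℤ)

/-- `iter F n` is triangulated. -/
lemma iterIsTriangulated (F : D ⥤ D) [F.CommShift ℤ] [F.IsTriangulated] :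
    ∀ n : ℕ, letI := iterCommShift F n; (iter F n).IsTriangulated
  | 0 => inferInstanceAs ((𝟭 D).IsTriangulated)
  | n + 1 => by
      letI := iterCommShift F n
      letI := iterIsTriangulated F n
      exact inferInstanceAs ((iter F n ⋙ F).IsTriangulated)

/-- The adjunction between iterates. -/
noncomputable def adjIter (F G : D ⥤ D) (adj : G ⊣ F) :
    ∀ n : ℕ, iter G n ⊣ iter F n
  | 0 => Adjunction.id
  | n + 1 => ((adjIter F G adj n).comp adj).ofNatIsoRight (iterCompIso F n)

lemma iterMapZero (F : D ⥤ D) [F.Additive] :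
    ∀ (n : ℕ) (X Y : D), (iter F n).map (0 : X ⟶ Y) = 0
  | 0, _, _ => rfl
  | n + 1, X, Y => by
      show F.map ((iter F n).map (0 : X ⟶ Y)) = 0
      rw [iterMapZero F n, F.map_zero]

theorem left_adjoint_nilpotent_on_left_orthogonal
    (P : D → Prop)
    -- `E` is a thick subcategory:
    (hP_iso : ∀ {X Y : D}, (X ≅ Y) → P X → P Y)
    (hP_shift : ∀ (X : D) (n : ℤ), P X → P (X⟦n⟧))
    (hP_tri : ∀ T ∈ distTriang D, P T.obj₁ → P T.obj₂ → P T.obj₃)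
    (hP_retract : ∀ (X Z : D), P Z → ∀ (i : X ⟶ Z) (r : Z ⟶ X), i ≫ r = 𝟙 X → P X)
    -- `E` is admissible:
    (_hadm_right : (ObjectProperty.ι P).IsLeftAdjoint)
    (_hadm_left : (ObjectProperty.ι P).IsRightAdjoint)
    -- `(G, F)` an adjoint pair of exact endofunctors:
    (F G : D ⥤ D) [F.CommShift ℤ] [F.IsTriangulated] [G.CommShift ℤ] [G.IsTriangulated]
    (adj : G ⊣ F)
    -- `F` restricts to an autoequivalence of `E`:
    (hFP : ∀ d : D, P d → P (F.obj d))
    (hFE : (ObjectProperty.lift P (ObjectProperty.ι P ⋙ F)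
      (fun X => hFP X.1 X.2)).IsEquivalence)
    -- `F` acts nilpotently on `E^⊥`:
    (hFperp : ∀ d : D, rOrth P d → rOrth P (F.obj d))
    (hnilp : ∃ b : ℕ, ∀ d : D, rOrth P d → IsZero ((iter F b).obj d)) :
    (∀ d : D, lOrth P d → lOrth P (G.obj d)) ∧
      ∃ b : ℕ, ∀ d : D, lOrth P d → IsZero ((iter G b).obj d) := by
  classical
  obtain ⟨b, hb⟩ := hnilp
  haveI : (ObjectProperty.ι P).IsLeftAdjoint := _hadm_right
  let R := (ObjectProperty.ι P).rightAdjoint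
  let adjR : ObjectProperty.ι P ⊣ R :=
    Adjunction.ofIsLeftAdjoint (ObjectProperty.ι P)
  -- post-composition with the counit is bijective on maps from objects of `E`
  have hbij : ∀ (x e : D) (he : P e),
      Function.Bijective
        (fun u : e ⟶ (ObjectProperty.ι P).obj (R.obj x) =>
          u ≫ adjR.counit.app x) := by
    intro x e he
    have heq : (fun u : e ⟶ (ObjectProperty.ι P).obj (R.obj x) =>
        u ≫ adjR.counit.app x)
        = fun u => ((ObjectProperty.fullyFaithfulι P).homEquiv.symm.trans
            (adjR.homEquiv ⟨e, he⟩ x).symm) u := by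
      funext u
      rw [Equiv.trans_apply, Adjunction.homEquiv_counit]
      rfl
    rw [heq]
    exact ((ObjectProperty.fullyFaithfulι P).homEquiv.symm.trans
      (adjR.homEquiv ⟨e, he⟩ x).symm).bijective
  -- the key vanishing statement
  have key : ∀ (d : D), lOrth P d → ∀ (x : D) (g : d ⟶ (iter F b).obj x), g = 0 := by
    intro d hd x g
    have hqP : P ((ObjectProperty.ι P).obj (R.obj x)) := (R.obj x).2
    obtain ⟨c, h, w, hT⟩ :=
      Pretriangulated.distinguished_cocone_triangle (adjR.counit.app x)
    -- the cone lies in the right orthogonal of `P`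
    have hc : rOrth P c := by
      intro e he f
      have hw : f ≫ w = 0 := by
        have hz : (f ≫ w) ≫ (adjR.counit.app x)⟦(1 : ℤ)⟧' = 0 := by
          have h31 := comp_distTriang_mor_zero₃₁ _ hT
          dsimp at h31
          rw [Category.assoc]; exact (congrArg (f ≫ ·) h31).trans comp_zero
        let adjS := (shiftEquiv' D (-1 : ℤ) (1 : ℤ) (by omega)).toAdjunction
        have hnat : (adjS.homEquiv e x).symm ((f ≫ w) ≫ (adjR.counit.app x)⟦(1 : ℤ)⟧')
            = (adjS.homEquiv e _).symm (f ≫ w) ≫ adjR.counit.app x :=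
          adjS.homEquiv_naturality_right_symm (f ≫ w) (adjR.counit.app x)
        erw [hz] at hnat
        have hL0 : (adjS.homEquiv e x).symm 0 = 0 := by
          rw [Adjunction.homEquiv_counit, Functor.map_zero, zero_comp]
        erw [hL0] at hnat
        have hu0 : (adjS.homEquiv e _).symm (f ≫ w) = 0 := by
          apply (hbij x (e⟦(-1 : ℤ)⟧) (hP_shift e (-1) he)).1
          dsimp only
          erw [← hnat, zero_comp]; rfl
        have := congrArg (adjS.homEquiv e _) hu0
        rw [Equiv.apply_symm_apply] at this
        erw [this, Adjunction.homEquiv_unit, Functor.map_zero, comp_zero]; rfl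
      obtain ⟨g', hg'⟩ := Triangle.coyoneda_exact₃ _ hT f hw
      obtain ⟨u, hu⟩ := (hbij x e he).2 g'
      have h12 := comp_distTriang_mor_zero₁₂ _ hT
      dsimp at h12 hg'
      rw [hg', ← hu]; exact (Category.assoc _ _ _).trans ((congrArg (u ≫ ·) h12).trans comp_zero)
    -- map the triangle by `iter F b`
    letI := iterCommShift F b
    letI := iterIsTriangulated F b
    have hT' := (iter F b).map_distinguished _ hT
    have hz3 : IsZero ((iter F b).obj c) := hb c hc
    have hg2 : g ≫ ((iter F b).mapTriangle.obj (Triangle.mk (adjR.counit.app x) h w)).mor₂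
        = 0 := hz3.eq_zero_of_tgt _
    obtain ⟨u, hu⟩ := Triangle.coyoneda_exact₂ _ hT' g hg2
    have hu0 : u = 0 := hd _ (iterP P F hFP b _ hqP) u
    rw [hu, hu0, zero_comp]; rfl
  constructor
  · intro d hd e he f
    have h0 : adj.homEquiv d e f = 0 := hd _ (hFP e he) _
    have := congrArg (adj.homEquiv d e).symm h0
    rw [Equiv.symm_apply_apply] at this
    rw [this, Adjunction.homEquiv_counit, Functor.map_zero, zero_comp]
  · refine ⟨b, fun d hd => ?_⟩
    rw [IsZero.iff_id_eq_zero]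
    have h0 : (adjIter F G adj b).homEquiv d ((iter G b).obj d) (𝟙 _) = 0 :=
      key d hd _ _
    have := congrArg ((adjIter F G adj b).homEquiv d ((iter G b).obj d)).symm h0
    rw [Equiv.symm_apply_apply] at this
    rw [this, Adjunction.homEquiv_counit, iterMapZero G b, zero_comp]


end Stmt5
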